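/- For every s ∈ (0,1), the ratio φ'_n(φ_n^{−1}(s)) / c_n converges as n → ∞ to a positive finite constant. -/

import Mathlib

open MeasureTheory Filter Set
open scoped ENNReal NNReal

noncomputable section

/-- A configuration assigns to each Ulam–Harris label (a finite word on `ℕ`)
a number of children. A Galton–Watson tree is encoded by such a configuration. -/
abbrev Config : Type := List ℕ → ℕ

/-- `v` is a vertex of the tree encoded by the configuration `ω`:
every step of the path from the root is the index of a child of the previous vertex. -/
def memTree (ω : Config) (v : List ℕ) : Prop :=
  ∀ k, (h : k < v.length) → v.get ⟨k, h⟩ < ω (v.take k)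

/-- `Z ω u k` is the number of descendants of the vertex `u` at height `|u| + k`
in the tree encoded by `ω`. -/
def Z (ω : Config) (u : List ℕ) (k : ℕ) : ℕ :=
  Nat.card {v : List ℕ // v.length = k ∧ memTree ω (u ++ v)}

/-- `GW` is the law of the Galton–Watson tree with offspring distribution `q`:
under `GW` the numbers of children attached to the distinct labels
are i.i.d. with distribution `q`. -/
def IsGW (q : ℕ → ℝ) (GW : Measure Config) : Prop :=
  IsProbabilityMeasure GW ∧
    ∀ (S : Finset (List ℕ)) (g : List ℕ → ℕ),
      GW {ω | ∀ u ∈ S, ω u = g u} = ∏ u ∈ S, ENNReal.ofReal (q (g u))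

/-- The probability generating function `φ_n(x) = E[x^{Z_n}]` of the population
at height `n` under the measure `GW`. -/
def pgf (GW : Measure Config) (n : ℕ) (x : ℝ) : ℝ :=
  ∫ ω, x ^ (Z ω [] n) ∂GW

namespace GWaux


theorem memTree_iff (ω : Config) (v : List ℕ) :
    memTree ω v ↔ ∀ k, (h : k < v.length) → v[k] < ω (v.take k) := by
  simp [memTree, List.get_eq_getElem]

theorem memTree_nil (ω : Config) : memTree ω [] := by
  intro k h; simp at h

theorem memTree_take (ω : Config) {v : List ℕ} (hv : memTree ω v) (i : ℕ) :
    memTree ω (v.take i) := by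
  rw [memTree_iff] at hv ⊢
  intro k hk
  have hk' : k < v.length := lt_of_lt_of_le hk (by simp [List.length_take])
  have h2 : (v.take i).take k = v.take k := by
    rw [List.take_take]
    congr 1
    have : k < i := by simp [List.length_take] at hk; omega
    omega
  have h1 : (v.take i)[k]'hk = v[k]'hk' := by
    simp [List.getElem_take]
  rw [h1, h2]
  exact hv k hk'

theorem memTree_append_singleton (ω : Config) (v : List ℕ) (j : ℕ) :
    memTree ω (v ++ [j]) ↔ memTree ω v ∧ j < ω v := by
  rw [memTree_iff, memTree_iff]
  constructor
  · intro h
    constructor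
    · intro k hk
      have hk' : k < (v ++ [j]).length := by simp; omega
      have := h k hk'
      rwa [List.getElem_append_left hk, List.take_append_of_le_length (le_of_lt hk)] at this
    · have hk' : v.length < (v ++ [j]).length := by simp
      have := h v.length hk'
      have hg : (v ++ [j])[v.length]'hk' = j := by simp
      rwa [hg, List.take_append_of_le_length (le_refl _), List.take_length] at this
  · rintro ⟨h1, h2⟩ k hk
    simp only [List.length_append, List.length_singleton] at hk
    rcases Nat.lt_succ_iff_lt_or_eq.1 hk with hk' | hk'
    · rw [List.getElem_append_left hk', List.take_append_of_le_length (le_of_lt hk')]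
      exact h1 k hk'
    · subst hk'
      have hg : (v ++ [j])[v.length]'(by simp) = j := by simp
      rw [hg, List.take_append_of_le_length (le_refl _), List.take_length]
      exact h2

/-- The set of vertices at level `n` of the tree encoded by `ω`, as a `Finset`. -/
def levF (ω : Config) : ℕ → Finset (List ℕ)
  | 0 => {[]}
  | n+1 => (levF ω n).biUnion (fun v => (Finset.range (ω v)).image (fun j => v ++ [j]))

theorem mem_levF (ω : Config) : ∀ n (v : List ℕ),
    v ∈ levF ω n ↔ (v.length = n ∧ memTree ω v) := by
  intro n
  induction n with
  | zero =>
    intro v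
    simp only [levF, Finset.mem_singleton, List.length_eq_zero_iff]
    constructor
    · rintro rfl; exact ⟨rfl, memTree_nil ω⟩
    · rintro ⟨rfl, _⟩; rfl
  | succ n ih =>
    intro v
    simp only [levF, Finset.mem_biUnion, Finset.mem_image, Finset.mem_range]
    constructor
    · rintro ⟨w, hw, j, hj, rfl⟩
      obtain ⟨hwl, hwt⟩ := (ih w).1 hw
      refine ⟨by simp [hwl], ?_⟩
      rw [memTree_append_singleton]
      exact ⟨hwt, hj⟩
    · rintro ⟨hl, ht⟩
      have hv' : v.take (n+1) = v := by rw [← hl, List.take_length]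
      have hvt : v.take n ++ [v[n]'(by omega)] = v := by
        conv_rhs => rw [← hv']
        rw [List.take_succ, List.getElem?_eq_getElem (by omega)]
        rfl
      refine ⟨v.take n, ?_, v[n]'(by omega), ?_, hvt⟩
      · exact (ih _).2 ⟨by simp [List.length_take]; omega, memTree_take ω ht n⟩
      · have := ht
        rw [← hvt, memTree_append_singleton] at this
        exact this.2

theorem length_of_mem_levF {ω : Config} {n : ℕ} {v : List ℕ} (h : v ∈ levF ω n) :
    v.length = n := ((mem_levF ω n v).1 h).1

theorem Z_eq_card_levF (ω : Config) (n : ℕ) : Z ω [] n = (levF ω n).card := by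
  rw [Z]
  have : {v : List ℕ // v.length = n ∧ memTree ω ([] ++ v)} ≃ {v : List ℕ // v ∈ levF ω n} :=
    Equiv.subtypeEquivRight (by intro v; rw [List.nil_append, mem_levF])
  rw [Nat.card_congr this, Nat.card_eq_fintype_card, Fintype.card_coe]

theorem card_levF_succ (ω : Config) (n : ℕ) :
    (levF ω (n+1)).card = ∑ v ∈ levF ω n, ω v := by
  rw [levF, Finset.card_biUnion]
  · refine Finset.sum_congr rfl fun v _ => ?_
    rw [Finset.card_image_of_injective _ (fun a b hab => by simpa using hab), Finset.card_range]
  · intro x hx y hy hxy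
    simp only [Finset.disjoint_left, Finset.mem_image, Finset.mem_range]
    rintro a ⟨j, hj, rfl⟩ ⟨j', hj', he⟩
    have hlen : x.length = y.length := by
      rw [length_of_mem_levF hx, length_of_mem_levF hy]
    exact hxy ((List.append_inj he hlen.symm).1.symm)


theorem levF_zero (ω : Config) : levF ω 0 = {[]} := rfl
theorem levF_succ (ω : Config) (n : ℕ) :
  levF ω (n+1) = (levF ω n).biUnion (fun v => (Finset.range (ω v)).image (fun j => v ++ [j])) := rfl




/-- all vertices of the tree at levels `< n` -/
def Dn (ω : Config) (n : ℕ) : Finset (List ℕ) := (Finset.range n).biUnion (levF ω)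

theorem mem_Dn {ω : Config} {n : ℕ} {v : List ℕ} :
    v ∈ Dn ω n ↔ ∃ k, k < n ∧ v ∈ levF ω k := by
  simp [Dn]

theorem length_lt_of_mem_Dn {ω : Config} {n : ℕ} {v : List ℕ} (h : v ∈ Dn ω n) :
    v.length < n := by
  obtain ⟨k, hk, hv⟩ := mem_Dn.1 h
  rw [length_of_mem_levF hv]; exact hk

theorem levF_congr {ω ω₀ : Config} {n : ℕ}
    (h : ∀ k, k < n → ∀ v, v ∈ levF ω k → v ∈ levF ω₀ k → ω v = ω₀ v) :
    ∀ k, k ≤ n → levF ω k = levF ω₀ k := by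
  intro k
  induction k with
  | zero => intro _; rw [levF_zero, levF_zero]
  | succ k ih =>
    intro hk
    have he := ih (by omega)
    rw [levF_succ, levF_succ, he]
    apply Finset.biUnion_congr rfl
    intro v hv
    rw [h k (by omega) v (he ▸ hv) hv]

theorem Dn_congr {ω ω₀ : Config} {n : ℕ}
    (h : ∀ k, k < n → ∀ v, v ∈ levF ω k → v ∈ levF ω₀ k → ω v = ω₀ v) :
    Dn ω n = Dn ω₀ n := by
  apply Finset.biUnion_congr rfl
  intro k hk
  exact levF_congr h k (le_of_lt (Finset.mem_range.1 hk))

/-- cylinder event -/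
def cyl (S : Finset (List ℕ)) (g : List ℕ → ℕ) : Set Config := {ω | ∀ u ∈ S, ω u = g u}

theorem measurableSet_cyl (S : Finset (List ℕ)) (g : List ℕ → ℕ) :
    MeasurableSet (cyl S g) := by
  have : cyl S g = ⋂ u ∈ S, (fun ω : Config => ω u) ⁻¹' {g u} := by
    ext ω; simp [cyl]
  rw [this]
  exact MeasurableSet.biInter S.countable_toSet
    fun u _ => (measurable_pi_apply u) (measurableSet_singleton _)

/-- the finite-information map recording the tree up to level `n` and the offspring
numbers of all vertices at levels `< n`. -/
def psi (ω : Config) (n : ℕ) : List ℕ →₀ ℕ :=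
  Finsupp.onFinset (Dn ω n) (fun v => if v ∈ Dn ω n then ω v else 0)
    (fun a ha => by by_contra h; simp [h] at ha)

theorem psi_apply (ω : Config) (n : ℕ) (v : List ℕ) :
    psi ω n v = if v ∈ Dn ω n then ω v else 0 := rfl

theorem levF_eq_of_psi_eq {ω ω₀ : Config} {n : ℕ} (h : psi ω n = psi ω₀ n) :
    ∀ k, k ≤ n → levF ω k = levF ω₀ k := by
  apply levF_congr
  intro k hk v hv hv₀
  have h1 : v ∈ Dn ω n := mem_Dn.2 ⟨k, hk, hv⟩
  have h2 : v ∈ Dn ω₀ n := mem_Dn.2 ⟨k, hk, hv₀⟩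
  have := DFunLike.congr_fun h v
  rw [psi_apply, psi_apply, if_pos h1, if_pos h2] at this
  exact this

theorem psi_fiber_eq_cyl (ω₀ : Config) (n : ℕ) :
    {ω | psi ω n = psi ω₀ n} = cyl (Dn ω₀ n) ω₀ := by
  ext ω
  simp only [Set.mem_setOf_eq, cyl]
  constructor
  · intro h u hu
    have hD : Dn ω n = Dn ω₀ n := by
      apply Dn_congr
      intro k hk v hv hv₀
      have h1 : v ∈ Dn ω n := mem_Dn.2 ⟨k, hk, hv⟩
      have h2 : v ∈ Dn ω₀ n := mem_Dn.2 ⟨k, hk, hv₀⟩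
      have := DFunLike.congr_fun h v
      rw [psi_apply, psi_apply, if_pos h1, if_pos h2] at this
      exact this
    have := DFunLike.congr_fun h u
    rw [psi_apply, psi_apply, if_pos (hD ▸ hu), if_pos hu] at this
    exact this
  · intro h
    have hlev : ∀ k, k ≤ n → levF ω k = levF ω₀ k := by
      apply levF_congr
      intro k hk v _ hv₀
      exact h v (mem_Dn.2 ⟨k, hk, hv₀⟩)
    have hD : Dn ω n = Dn ω₀ n := by
      apply Finset.biUnion_congr rfl
      intro k hk
      exact hlev k (le_of_lt (Finset.mem_range.1 hk))
    apply Finsupp.ext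
    intro v
    rw [psi_apply, psi_apply, hD]
    by_cases hv : v ∈ Dn ω₀ n
    · rw [if_pos hv, if_pos hv, h v hv]
    · rw [if_neg hv, if_neg hv]

theorem measurableSet_psi_fiber (n : ℕ) (i : List ℕ →₀ ℕ) :
    MeasurableSet {ω : Config | psi ω n = i} := by
  rcases Set.eq_empty_or_nonempty {ω : Config | psi ω n = i} with he | ⟨ω₀, hω₀⟩
  · rw [he]; exact MeasurableSet.empty
  · have : {ω : Config | psi ω n = i} = cyl (Dn ω₀ n) ω₀ := by
      rw [← psi_fiber_eq_cyl]
      simp only [Set.mem_setOf_eq] at hω₀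
      rw [hω₀]
    rw [this]
    exact measurableSet_cyl _ _

instance : Countable (List ℕ →₀ ℕ) := by infer_instance

theorem lintegral_partition (GW : Measure Config) (n : ℕ) (f : Config → ℝ≥0∞) :
    ∫⁻ ω, f ω ∂GW = ∑' i : (List ℕ →₀ ℕ), ∫⁻ ω in {ω' | psi ω' n = i}, f ω ∂GW := by
  have hcover : (⋃ i : (List ℕ →₀ ℕ), {ω : Config | psi ω n = i}) = Set.univ := by
    ext ω; simp only [Set.mem_iUnion, Set.mem_setOf_eq, Set.mem_univ, iff_true]
    exact ⟨psi ω n, rfl⟩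
  have hdisj : Pairwise (Function.onFun Disjoint (fun i => {ω : Config | psi ω n = i})) := by
    intro i j hij
    simp only [Function.onFun, Set.disjoint_left, Set.mem_setOf_eq]
    rintro ω rfl h; exact hij h
  rw [← setLIntegral_univ, ← hcover, lintegral_iUnion (measurableSet_psi_fiber n) hdisj]

theorem measurable_prod_coord (x : ℝ) (V : Finset (List ℕ)) :
    Measurable (fun ω : Config => ∏ v ∈ V, ENNReal.ofReal (x ^ ω v)) := by
  apply Finset.measurable_prod
  intro v _
  exact Measurable.comp (f := fun ω : Config => ω v)
    (g := fun t : ℕ => ENNReal.ofReal (x ^ t)) (measurable_from_top) (measurable_pi_apply v)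

theorem core (q : ℕ → ℝ) (GW : Measure Config) (hGW : IsGW q GW)
    (hq_nonneg : ∀ k, 0 ≤ q k) (hq_summable : Summable q)
    (x : ℝ) (hx0 : 0 ≤ x) (hx1 : x ≤ 1) :
    ∀ (V : Finset (List ℕ)), ∀ (S : Finset (List ℕ)) (g : List ℕ → ℕ), Disjoint V S →
    ∫⁻ ω in cyl S g, ∏ v ∈ V, ENNReal.ofReal (x ^ ω v) ∂GW
      = (∏ u ∈ S, ENNReal.ofReal (q (g u))) *
          (ENNReal.ofReal (∑' k, q k * x ^ k)) ^ V.card := by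
  intro V
  induction V using Finset.induction_on with
  | empty =>
    intro S g _
    simp only [Finset.prod_empty, Finset.card_empty, pow_zero, mul_one]
    rw [setLIntegral_one]
    exact hGW.2 S g
  | @insert a V ha ih =>
    intro S g hdis
    have haS : a ∉ S := Finset.disjoint_left.1 hdis (Finset.mem_insert_self a V)
    have hVS : Disjoint V S := Finset.disjoint_of_subset_left (Finset.subset_insert a V) hdis
    -- partition the cylinder according to the value of ω a
    have hpart : cyl S g = ⋃ j : ℕ, cyl (insert a S) (Function.update g a j) := by
      ext ω
      simp only [cyl, Set.mem_setOf_eq, Set.mem_iUnion]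
      constructor
      · intro h
        refine ⟨ω a, ?_⟩
        intro u hu
        rcases Finset.mem_insert.1 hu with rfl | hu
        · simp
        · have hua : u ≠ a := fun he => haS (by rw [← he]; exact hu)
          rw [Function.update_of_ne hua]
          exact h u hu
      · rintro ⟨j, hj⟩ u hu
        have hua : u ≠ a := fun he => haS (by rw [← he]; exact hu)
        have := hj u (Finset.mem_insert_of_mem hu)
        rwa [Function.update_of_ne hua] at this
    have hdisjU : Pairwise (Function.onFun Disjoint
        (fun j : ℕ => cyl (insert a S) (Function.update g a j))) := by
      intro i j hij
      simp only [Function.onFun, Set.disjoint_left, cyl, Set.mem_setOf_eq]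
      intro ω h1 h2
      have e1 := h1 a (Finset.mem_insert_self a S)
      have e2 := h2 a (Finset.mem_insert_self a S)
      rw [Function.update_self] at e1 e2
      exact hij (e1 ▸ e2)
    rw [hpart, lintegral_iUnion (fun j => measurableSet_cyl _ _) hdisjU]
    have hstep : ∀ j : ℕ,
        ∫⁻ ω in cyl (insert a S) (Function.update g a j),
          ∏ v ∈ insert a V, ENNReal.ofReal (x ^ ω v) ∂GW
        = ENNReal.ofReal (q j * x ^ j) * ((∏ u ∈ S, ENNReal.ofReal (q (g u))) *
            (ENNReal.ofReal (∑' k, q k * x ^ k)) ^ V.card) := by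
      intro j
      have hcong : ∀ ω ∈ cyl (insert a S) (Function.update g a j),
          (∏ v ∈ insert a V, ENNReal.ofReal (x ^ ω v))
            = ENNReal.ofReal (x ^ j) * ∏ v ∈ V, ENNReal.ofReal (x ^ ω v) := by
        intro ω hω
        rw [Finset.prod_insert ha]
        have : ω a = j := by
          have := hω a (Finset.mem_insert_self a S)
          rwa [Function.update_self] at this
        rw [this]
      rw [setLIntegral_congr_fun (measurableSet_cyl _ _) hcong,
        lintegral_const_mul _ (measurable_prod_coord x V)]
      have hVS' : Disjoint V (insert a S) := Finset.disjoint_insert_right.2 ⟨ha, hVS⟩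
      rw [ih (insert a S) (Function.update g a j) hVS']
      rw [Finset.prod_insert haS, Function.update_self]
      have hgu : ∀ u ∈ S, Function.update g a j u = g u := by
        intro u hu
        exact Function.update_of_ne (fun he => haS (by rw [← he]; exact hu)) _ _
      rw [Finset.prod_congr rfl (fun u hu => by rw [hgu u hu])]
      rw [ENNReal.ofReal_mul (hq_nonneg j)]
      ring
    rw [tsum_congr hstep, ENNReal.tsum_mul_right]
    have hsum : Summable (fun k => q k * x ^ k) := by
      apply Summable.of_nonneg_of_le (fun k => mul_nonneg (hq_nonneg k) (pow_nonneg hx0 k))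
        (fun k => ?_) hq_summable
      calc q k * x ^ k ≤ q k * 1 := by
            apply mul_le_mul_of_nonneg_left (pow_le_one₀ hx0 hx1) (hq_nonneg k)
        _ = q k := mul_one _
    have : (∑' k : ℕ, ENNReal.ofReal (q k * x ^ k)) = ENNReal.ofReal (∑' k, q k * x ^ k) := by
      rw [ENNReal.ofReal_tsum_of_nonneg
        (fun k => mul_nonneg (hq_nonneg k) (pow_nonneg hx0 k)) hsum]
    rw [this, Finset.card_insert_of_notMem ha, pow_succ]
    ring

theorem measurableSet_levF_fiber : ∀ (n : ℕ) (S : Finset (List ℕ)),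
    MeasurableSet {ω : Config | levF ω n = S} := by
  intro n
  induction n with
  | zero =>
    intro S
    by_cases h : ({[]} : Finset (List ℕ)) = S
    · have : {ω : Config | levF ω 0 = S} = Set.univ := by
        ext ω; simp [levF_zero, h]
      rw [this]; exact MeasurableSet.univ
    · have : {ω : Config | levF ω 0 = S} = ∅ := by
        ext ω; simp [levF_zero]; intro hc; exact h (hc ▸ rfl)
      rw [this]; exact MeasurableSet.empty
  | succ n ih =>
    intro S
    have : {ω : Config | levF ω (n+1) = S}
        = ⋃ (T : Finset (List ℕ)) (f : List ℕ →₀ ℕ)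
            (_ : T.biUnion (fun v => (Finset.range (f v)).image (fun j => v ++ [j])) = S),
            ({ω : Config | levF ω n = T} ∩ cyl T f) := by
      ext ω
      simp only [Set.mem_setOf_eq, Set.mem_iUnion, Set.mem_inter_iff]
      constructor
      · intro h
        refine ⟨levF ω n, Finsupp.onFinset (levF ω n)
            (fun v => if v ∈ levF ω n then ω v else 0)
            (fun a ha => by by_contra hc; simp [hc] at ha), ?_, rfl, ?_⟩
        · rw [← h, levF_succ]
          apply Finset.biUnion_congr rfl
          intro v hv
          simp [Finsupp.onFinset_apply, if_pos hv]
        · intro u hu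
          simp [cyl, Finsupp.onFinset_apply, if_pos hu]
      · rintro ⟨T, f, hshape, hT, hcyl⟩
        rw [levF_succ, hT, ← hshape]
        apply Finset.biUnion_congr rfl
        intro v hv
        rw [hcyl v hv]
    rw [this]
    apply MeasurableSet.iUnion; intro T
    apply MeasurableSet.iUnion; intro f
    apply MeasurableSet.iUnion; intro _
    exact (ih T).inter (measurableSet_cyl T f)

theorem measurable_Z (n : ℕ) : Measurable (fun ω : Config => Z ω [] n) := by
  apply measurable_to_countable'
  intro z
  have : (fun ω : Config => Z ω [] n) ⁻¹' {z} = ⋃ (S : Finset (List ℕ)) (_ : S.card = z),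
      {ω : Config | levF ω n = S} := by
    ext ω
    simp only [Set.mem_preimage, Set.mem_singleton_iff, Set.mem_iUnion, Set.mem_setOf_eq,
      Z_eq_card_levF]
    constructor
    · intro h; exact ⟨levF ω n, h, rfl⟩
    · rintro ⟨S, hc, hl⟩; rw [hl]; exact hc
  rw [this]
  exact MeasurableSet.iUnion fun S => MeasurableSet.iUnion fun _ => measurableSet_levF_fiber n S

theorem pgf_zero (GW : Measure Config) [IsProbabilityMeasure GW] (x : ℝ) :
    pgf GW 0 x = x := by
  have hZ : ∀ ω : Config, Z ω [] 0 = 1 := by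
    intro ω; rw [Z_eq_card_levF, levF_zero]; simp
  rw [pgf]
  simp only [hZ, pow_one]
  rw [integral_const]
  simp [measure_univ]

theorem pgf_eq_lintegral (GW : Measure Config) (x : ℝ) (hx0 : 0 ≤ x) (n : ℕ) :
    pgf GW n x = (∫⁻ ω, ENNReal.ofReal (x ^ Z ω [] n) ∂GW).toReal := by
  rw [pgf, integral_eq_lintegral_of_nonneg_ae]
  · exact Filter.Eventually.of_forall (fun ω => pow_nonneg hx0 _)
  · exact ((measurable_from_top (f := fun t : ℕ => x ^ t)).comp
      (measurable_Z n)).aestronglyMeasurable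

theorem pgf_succ (q : ℕ → ℝ) (GW : Measure Config) (hGW : IsGW q GW)
    (hq_nonneg : ∀ k, 0 ≤ q k) (hq_summable : Summable q)
    (x : ℝ) (hx0 : 0 ≤ x) (hx1 : x ≤ 1) (n : ℕ) :
    pgf GW (n+1) x = pgf GW n (∑' k, q k * x ^ k) := by
  have hF0 : 0 ≤ ∑' k, q k * x ^ k :=
    tsum_nonneg (fun k => mul_nonneg (hq_nonneg k) (pow_nonneg hx0 k))
  rw [pgf_eq_lintegral GW x hx0 (n+1), pgf_eq_lintegral GW _ hF0 n]
  congr 1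
  rw [lintegral_partition GW n (fun ω => ENNReal.ofReal (x ^ Z ω [] (n+1))),
      lintegral_partition GW n (fun ω => ENNReal.ofReal ((∑' k, q k * x ^ k) ^ Z ω [] n))]
  apply tsum_congr
  intro i
  rcases Set.eq_empty_or_nonempty {ω' : Config | psi ω' n = i} with he | ⟨ω₀, hω₀⟩
  · rw [he]; simp [Measure.restrict_empty]
  · simp only [Set.mem_setOf_eq] at hω₀
    have hfib : {ω' : Config | psi ω' n = i} = cyl (Dn ω₀ n) ω₀ := by
      rw [← hω₀]; exact psi_fiber_eq_cyl ω₀ n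
    have hlev : ∀ ω ∈ cyl (Dn ω₀ n) ω₀, levF ω n = levF ω₀ n := by
      intro ω hω
      have hmem : ω ∈ {ω' : Config | psi ω' n = i} := hfib ▸ hω
      rw [Set.mem_setOf_eq] at hmem
      exact levF_eq_of_psi_eq (hmem.trans hω₀.symm) n (le_refl n)
    rw [hfib]
    have hdisj : Disjoint (levF ω₀ n) (Dn ω₀ n) := by
      rw [Finset.disjoint_left]
      intro v hv hv'
      have h1 := length_of_mem_levF hv
      have h2 := length_lt_of_mem_Dn hv'
      omega
    -- left side
    have hcong : ∀ ω ∈ cyl (Dn ω₀ n) ω₀,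
        ENNReal.ofReal (x ^ Z ω [] (n+1))
          = ∏ v ∈ levF ω₀ n, ENNReal.ofReal (x ^ ω v) := by
      intro ω hω
      have h1 : Z ω [] (n+1) = ∑ v ∈ levF ω₀ n, ω v := by
        rw [Z_eq_card_levF, card_levF_succ, hlev ω hω]
      rw [h1, ← Finset.prod_pow_eq_pow_sum,
        ENNReal.ofReal_prod_of_nonneg (fun v _ => pow_nonneg hx0 _)]
    rw [setLIntegral_congr_fun (measurableSet_cyl _ _) hcong]
    rw [core q GW hGW hq_nonneg hq_summable x hx0 hx1 (levF ω₀ n) (Dn ω₀ n) ω₀ hdisj]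
    -- right side
    have hcong2 : ∀ ω ∈ cyl (Dn ω₀ n) ω₀,
        ENNReal.ofReal ((∑' k, q k * x ^ k) ^ Z ω [] n)
          = ENNReal.ofReal ((∑' k, q k * x ^ k) ^ (levF ω₀ n).card) := by
      intro ω hω
      rw [Z_eq_card_levF, hlev ω hω]
    rw [setLIntegral_congr_fun (measurableSet_cyl _ _) hcong2,
      setLIntegral_const, ENNReal.ofReal_pow hF0]
    rw [show (cyl (Dn ω₀ n) ω₀ : Set Config) = {ω | ∀ u ∈ Dn ω₀ n, ω u = ω₀ u} from rfl,
      hGW.2 (Dn ω₀ n) ω₀]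
    ring

theorem pgf_iter (q : ℕ → ℝ) (GW : Measure Config) (hGW : IsGW q GW)
    (hq_nonneg : ∀ k, 0 ≤ q k) (hq_summable : Summable q)
    (hmaps : ∀ x ∈ Set.Ioo (0:ℝ) 1, (∑' k, q k * x ^ k) ∈ Set.Ioo (0:ℝ) 1) :
    ∀ n, ∀ x ∈ Set.Ioo (0:ℝ) 1,
      pgf GW n x = (fun y => ∑' k, q k * y ^ k)^[n] x := by
  intro n
  induction n with
  | zero =>
    intro x hx
    have : IsProbabilityMeasure GW := hGW.1
    simp only [Function.iterate_zero, id_eq]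
    exact pgf_zero GW x
  | succ n ih =>
    intro x hx
    rw [pgf_succ q GW hGW hq_nonneg hq_summable x hx.1.le hx.2.le n,
      ih _ (hmaps x hx), Function.iterate_succ_apply]




def F (q : ℕ → ℝ) (x : ℝ) : ℝ := ∑' k, q k * x ^ k
def Fd (q : ℕ → ℝ) (x : ℝ) : ℝ := ∑' k, q k * ((k : ℝ) * x ^ (k - 1))
def sg (q : ℕ → ℝ) (t : ℝ) : ℝ := ∑' k, q k * (∑ j ∈ Finset.range k, t ^ j)

variable {q : ℕ → ℝ}

section basic
variable (hq0 : ∀ k, 0 ≤ q k) (hqs : Summable q)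

theorem summable_term (hq0 : ∀ k, 0 ≤ q k) (hqs : Summable q) {x : ℝ} (hx : |x| ≤ 1) :
    Summable (fun k => q k * x ^ k) := by
  apply Summable.of_norm_bounded hqs
  intro k
  rw [norm_mul, norm_pow]
  calc ‖q k‖ * ‖x‖ ^ k ≤ ‖q k‖ * 1 :=
        mul_le_mul_of_nonneg_left (pow_le_one₀ (norm_nonneg x) hx) (norm_nonneg _)
    _ = q k := by rw [mul_one, Real.norm_eq_abs, abs_of_nonneg (hq0 k)]

theorem summable_dterm (hq0 : ∀ k, 0 ≤ q k) (hms : Summable (fun k : ℕ => (k:ℝ) * q k))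
    {x : ℝ} (hx : |x| ≤ 1) :
    Summable (fun k => q k * ((k : ℝ) * x ^ (k - 1))) := by
  apply Summable.of_norm_bounded hms
  intro k
  rw [norm_mul, norm_mul, norm_pow]
  have h1 : ‖x‖ ^ (k-1) ≤ 1 := pow_le_one₀ (norm_nonneg x) hx
  have h2 : ‖q k‖ = q k := by rw [Real.norm_eq_abs, abs_of_nonneg (hq0 k)]
  have h3 : ‖(k:ℝ)‖ = (k:ℝ) := by rw [Real.norm_eq_abs, abs_of_nonneg (Nat.cast_nonneg k)]
  rw [h2, h3]
  calc q k * ((k:ℝ) * ‖x‖ ^ (k-1)) ≤ q k * ((k:ℝ) * 1) := by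
        apply mul_le_mul_of_nonneg_left _ (hq0 k)
        exact mul_le_mul_of_nonneg_left h1 (Nat.cast_nonneg k)
    _ = (k:ℝ) * q k := by ring

theorem summable_sgterm (hq0 : ∀ k, 0 ≤ q k) (hms : Summable (fun k : ℕ => (k:ℝ) * q k))
    {x : ℝ} (hx0 : 0 ≤ x) (hx : x ≤ 1) :
    Summable (fun k => q k * (∑ j ∈ Finset.range k, x ^ j)) := by
  apply Summable.of_nonneg_of_le
    (fun k => mul_nonneg (hq0 k) (Finset.sum_nonneg fun j _ => pow_nonneg hx0 j))
    (fun k => ?_) hms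
  calc q k * (∑ j ∈ Finset.range k, x ^ j) ≤ q k * (∑ _j ∈ Finset.range k, (1:ℝ)) := by
        apply mul_le_mul_of_nonneg_left _ (hq0 k)
        exact Finset.sum_le_sum fun j _ => pow_le_one₀ hx0 hx
    _ = (k:ℝ) * q k := by simp [mul_comm]

theorem hasDerivAt_F (hq0 : ∀ k, 0 ≤ q k) (hqs : Summable q)
    (hms : Summable (fun k : ℕ => (k:ℝ) * q k))
    {x : ℝ} (hx : x ∈ Ioo (-1:ℝ) 1) : HasDerivAt (F q) (Fd q x) x := by
  apply hasDerivAt_tsum_of_isPreconnected hms isOpen_Ioo (convex_Ioo (-1:ℝ) 1).isPreconnected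
    (g := fun k y => q k * y ^ k) (g' := fun k y => q k * ((k:ℝ) * y ^ (k-1)))
    (y₀ := 0) (u := fun k : ℕ => (k:ℝ) * q k)
  · intro k y _
    exact (hasDerivAt_pow k y).const_mul (q k)
  · intro k y hy
    have hy1 : |y| ≤ 1 := by
      rw [abs_le]; exact ⟨hy.1.le, hy.2.le⟩
    rw [norm_mul, norm_mul, norm_pow]
    have h2 : ‖q k‖ = q k := by rw [Real.norm_eq_abs, abs_of_nonneg (hq0 k)]
    have h3 : ‖(k:ℝ)‖ = (k:ℝ) := by rw [Real.norm_eq_abs, abs_of_nonneg (Nat.cast_nonneg k)]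
    rw [h2, h3]
    calc q k * ((k:ℝ) * ‖y‖ ^ (k-1)) ≤ q k * ((k:ℝ) * 1) := by
          apply mul_le_mul_of_nonneg_left _ (hq0 k)
          exact mul_le_mul_of_nonneg_left (pow_le_one₀ (norm_nonneg y) hy1) (Nat.cast_nonneg k)
      _ = (k:ℝ) * q k := by ring
  · exact ⟨by norm_num, by norm_num⟩
  · exact summable_term hq0 hqs (by norm_num)
  · exact hx

theorem F_nonneg (hq0 : ∀ k, 0 ≤ q k) {x : ℝ} (hx : 0 ≤ x) : 0 ≤ F q x :=
  tsum_nonneg fun k => mul_nonneg (hq0 k) (pow_nonneg hx k)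

theorem F_one (hq1 : ∑' k, q k = 1) : F q 1 = 1 := by
  simp [F, hq1]

theorem F_mono (hq0 : ∀ k, 0 ≤ q k) (hqs : Summable q) {x y : ℝ}
    (hx : 0 ≤ x) (hxy : x ≤ y) (hy : y ≤ 1) : F q x ≤ F q y := by
  apply Summable.tsum_le_tsum _ (summable_term hq0 hqs (abs_le.2 ⟨by linarith, by linarith⟩))
    (summable_term hq0 hqs (abs_le.2 ⟨by linarith, hy⟩))
  intro k
  exact mul_le_mul_of_nonneg_left (pow_le_pow_left₀ hx hxy k) (hq0 k)

theorem F_le_self (hq0 : ∀ k, 0 ≤ q k) (hqz : q 0 = 0) (hqs : Summable q)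
    (hq1 : ∑' k, q k = 1) {x : ℝ} (hx0 : 0 ≤ x) (hx1 : x ≤ 1) : F q x ≤ x := by
  have h1 : ∀ k, q k * x ^ k ≤ q k * x := by
    intro k
    cases k with
    | zero => simp [hqz]
    | succ k =>
      exact mul_le_mul_of_nonneg_left (pow_le_of_le_one hx0 hx1 (Nat.succ_ne_zero k)) (hq0 (k+1))
  calc F q x ≤ ∑' k, q k * x :=
        Summable.tsum_le_tsum h1 (summable_term hq0 hqs (abs_le.2 ⟨by linarith, hx1⟩)) (hqs.mul_right x)
    _ = x := by rw [tsum_mul_right, hq1, one_mul]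

theorem Fd_nonneg (hq0 : ∀ k, 0 ≤ q k) {x : ℝ} (hx : 0 ≤ x) : 0 ≤ Fd q x :=
  tsum_nonneg fun k =>
    mul_nonneg (hq0 k) (mul_nonneg (Nat.cast_nonneg k) (pow_nonneg hx _))

theorem Fd_mono (hq0 : ∀ k, 0 ≤ q k) (hms : Summable (fun k : ℕ => (k:ℝ) * q k)) {x y : ℝ}
    (hx : 0 ≤ x) (hxy : x ≤ y) (hy : y ≤ 1) : Fd q x ≤ Fd q y := by
  apply Summable.tsum_le_tsum _ (summable_dterm hq0 hms (abs_le.2 ⟨by linarith, by linarith⟩))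
    (summable_dterm hq0 hms (abs_le.2 ⟨by linarith, hy⟩))
  intro k
  apply mul_le_mul_of_nonneg_left _ (hq0 k)
  exact mul_le_mul_of_nonneg_left (pow_le_pow_left₀ hx hxy _) (Nat.cast_nonneg k)

theorem Fd_le (hq0 : ∀ k, 0 ≤ q k) (hms : Summable (fun k : ℕ => (k:ℝ) * q k)) {x : ℝ}
    (hx : 0 ≤ x) (hx1 : x ≤ 1) : Fd q x ≤ ∑' k : ℕ, (k:ℝ) * q k := by
  apply Summable.tsum_le_tsum _ (summable_dterm hq0 hms (abs_le.2 ⟨by linarith, hx1⟩)) hms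
  intro k
  calc q k * ((k:ℝ) * x ^ (k-1)) ≤ q k * ((k:ℝ) * 1) := by
        apply mul_le_mul_of_nonneg_left _ (hq0 k)
        exact mul_le_mul_of_nonneg_left (pow_le_one₀ hx hx1) (Nat.cast_nonneg k)
    _ = (k:ℝ) * q k := by ring

theorem F_pos (hq0 : ∀ k, 0 ≤ q k) (hqs : Summable q)
    {K : ℕ} (hK : 0 < q K) {x : ℝ} (hx : 0 < x) (hx1 : x ≤ 1) : 0 < F q x := by
  have h := Summable.le_tsum (summable_term hq0 hqs (abs_le.2 ⟨by linarith, hx1⟩)) K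
    (fun k _ => mul_nonneg (hq0 k) (pow_nonneg hx.le k))
  have : 0 < q K * x ^ K := mul_pos hK (pow_pos hx K)
  exact lt_of_lt_of_le this h

theorem Fd_pos (hq0 : ∀ k, 0 ≤ q k) (hms : Summable (fun k : ℕ => (k:ℝ) * q k))
    {K : ℕ} (hK2 : 1 ≤ K) (hK : 0 < q K) {x : ℝ} (hx : 0 < x) (hx1 : x ≤ 1) : 0 < Fd q x := by
  have h := Summable.le_tsum (summable_dterm hq0 hms (abs_le.2 ⟨by linarith, hx1⟩)) K
    (fun k _ => mul_nonneg (hq0 k) (mul_nonneg (Nat.cast_nonneg k) (pow_nonneg hx.le _)))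
  have hKpos : (0:ℝ) < (K:ℝ) := by exact_mod_cast hK2
  have : 0 < q K * ((K:ℝ) * x ^ (K-1)) := mul_pos hK (mul_pos hKpos (pow_pos hx _))
  exact lt_of_lt_of_le this h

theorem F_lt_self (hq0 : ∀ k, 0 ≤ q k) (hqz : q 0 = 0) (hqs : Summable q)
    (hq1 : ∑' k, q k = 1) {K : ℕ} (hK2 : 2 ≤ K) (hK : 0 < q K)
    {x : ℝ} (hx : 0 < x) (hx1 : x < 1) : F q x < x := by
  have hsum1 : Summable (fun k => q k * x ^ k) :=
    summable_term hq0 hqs (abs_le.2 ⟨by linarith, hx1.le⟩)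
  have hsum2 : Summable (fun k => q k * x) := hqs.mul_right x
  have hdiff : x - F q x = ∑' k, (q k * x - q k * x ^ k) := by
    rw [Summable.tsum_sub hsum2 hsum1, tsum_mul_right, hq1, one_mul, F]
  have hnn : ∀ k, 0 ≤ q k * x - q k * x ^ k := by
    intro k
    cases k with
    | zero => simp [hqz]
    | succ k =>
      have : x ^ (k+1) ≤ x := pow_le_of_le_one hx.le hx1.le (Nat.succ_ne_zero k)
      have := mul_le_mul_of_nonneg_left this (hq0 (k+1))
      linarith
  have hKterm : 0 < q K * x - q K * x ^ K := by
    have hxK : x ^ K < x := by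
      calc x ^ K ≤ x ^ 2 := pow_le_pow_of_le_one hx.le hx1.le hK2
        _ < x ^ 1 := pow_lt_pow_right_of_lt_one₀ hx hx1 (by omega)
        _ = x := pow_one x
    have := mul_lt_mul_of_pos_left hxK hK
    linarith
  have hle := Summable.le_tsum (hsum2.sub hsum1) K (fun k _ => hnn k)
  have : 0 < ∑' k, (q k * x - q k * x ^ k) := lt_of_lt_of_le hKterm hle
  linarith [hdiff ▸ this]

theorem sg_eq (hq0 : ∀ k, 0 ≤ q k) (hqs : Summable q) (hq1 : ∑' k, q k = 1)
    (hms : Summable (fun k : ℕ => (k:ℝ) * q k))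
    {t : ℝ} (ht0 : 0 ≤ t) (ht1 : t ≤ 1) : 1 - F q t = (1 - t) * sg q t := by
  have hsum1 : Summable (fun k => q k * t ^ k) :=
    summable_term hq0 hqs (abs_le.2 ⟨by linarith, ht1⟩)
  have h1 : 1 - F q t = ∑' k, (q k - q k * t ^ k) := by
    rw [Summable.tsum_sub hqs hsum1, hq1, F]
  rw [h1, sg, ← tsum_mul_left]
  apply tsum_congr
  intro k
  have hgeom : (∑ j ∈ Finset.range k, t ^ j) * (t - 1) = t ^ k - 1 := geom_sum_mul t k
  linear_combination (q k) * hgeom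

theorem sg_mono (hq0 : ∀ k, 0 ≤ q k) (hms : Summable (fun k : ℕ => (k:ℝ) * q k))
    {a b : ℝ} (ha : 0 ≤ a) (hab : a ≤ b) (hb : b ≤ 1) : sg q a ≤ sg q b := by
  apply Summable.tsum_le_tsum _ (summable_sgterm hq0 hms ha (by linarith))
    (summable_sgterm hq0 hms (by linarith) hb)
  intro k
  apply mul_le_mul_of_nonneg_left _ (hq0 k)
  exact Finset.sum_le_sum fun j _ => pow_le_pow_left₀ ha hab j

theorem key_ineq (hq0 : ∀ k, 0 ≤ q k) (hqz : q 0 = 0) (hqs : Summable q)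
    (hq1 : ∑' k, q k = 1) (hms : Summable (fun k : ℕ => (k:ℝ) * q k))
    {K : ℕ} (hK1 : 1 ≤ K) (hK : 0 < q K)
    {x : ℝ} (hx : x ∈ Ioo (0:ℝ) 1) :
    Fd q x * (-Real.log x) ≤ -Real.log (F q x) := by
  obtain ⟨hx0, hx1⟩ := hx
  set H : ℝ → ℝ := fun t => -Real.log (F q t) + Fd q x * Real.log t with hH
  have hFpos : ∀ t ∈ Icc x 1, 0 < F q t := by
    intro t ht
    exact F_pos hq0 hqs hK (lt_of_lt_of_le hx0 ht.1) ht.2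
  have hcont : ContinuousOn H (Icc x 1) := by
    apply ContinuousOn.add
    · apply ContinuousOn.neg
      apply ContinuousOn.log
      · apply continuousOn_tsum (u := q)
        · intro k
          exact (continuous_const.mul (continuous_pow k)).continuousOn
        · exact hqs
        · intro k t ht
          rw [norm_mul, norm_pow, Real.norm_eq_abs (q k), abs_of_nonneg (hq0 k)]
          calc q k * ‖t‖ ^ k ≤ q k * 1 := by
                apply mul_le_mul_of_nonneg_left _ (hq0 k)
                apply pow_le_one₀ (norm_nonneg t)
                rw [Real.norm_eq_abs, abs_le]
                exact ⟨by linarith [ht.1], ht.2⟩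
            _ = q k := mul_one _
      · intro t ht
        exact (hFpos t ht).ne'
    · apply ContinuousOn.mul continuousOn_const
      apply ContinuousOn.log continuousOn_id
      intro t ht
      exact (lt_of_lt_of_le hx0 ht.1).ne'
  have hderiv : ∀ t ∈ Ioo x 1, HasDerivAt H (-(Fd q t / F q t) + Fd q x * t⁻¹) t := by
    intro t ht
    have ht0 : 0 < t := lt_trans hx0 ht.1
    have htm : t ∈ Ioo (-1:ℝ) 1 := ⟨by linarith, ht.2⟩
    have h1 : HasDerivAt (fun t => -Real.log (F q t)) (-(Fd q t / F q t)) t := by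
      have := ((hasDerivAt_F hq0 hqs hms htm).log
        (F_pos hq0 hqs hK ht0 ht.2.le).ne').neg
      exact this
    have h2 : HasDerivAt (fun t => Fd q x * Real.log t) (Fd q x * t⁻¹) t :=
      (Real.hasDerivAt_log ht0.ne').const_mul (Fd q x)
    exact h1.add h2
  have hderiv_nonpos : ∀ t ∈ Ioo x 1, -(Fd q t / F q t) + Fd q x * t⁻¹ ≤ 0 := by
    intro t ht
    have ht0 : 0 < t := lt_trans hx0 ht.1
    have hFt : 0 < F q t := F_pos hq0 hqs hK ht0 ht.2.le
    have hFle : F q t ≤ t := F_le_self hq0 hqz hqs hq1 ht0.le ht.2.le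
    have hFdmono : Fd q x ≤ Fd q t := Fd_mono hq0 hms hx0.le ht.1.le ht.2.le
    have h1 : Fd q x * t⁻¹ ≤ Fd q t * t⁻¹ :=
      mul_le_mul_of_nonneg_right hFdmono (by positivity)
    have h2 : Fd q t * t⁻¹ ≤ Fd q t / F q t := by
      rw [div_eq_mul_inv]
      apply mul_le_mul_of_nonneg_left _ (Fd_nonneg hq0 (by linarith : (0:ℝ) ≤ t))
      exact inv_anti₀ hFt hFle
    linarith
  have hanti : AntitoneOn H (Icc x 1) := by
    apply antitoneOn_of_deriv_nonpos (convex_Icc x 1) hcont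
    · intro t ht
      rw [interior_Icc] at ht
      exact (hderiv t ht).differentiableAt.differentiableWithinAt
    · intro t ht
      rw [interior_Icc] at ht
      rw [(hderiv t ht).deriv]
      exact hderiv_nonpos t ht
  have := hanti (left_mem_Icc.2 hx1.le) (right_mem_Icc.2 hx1.le) hx1.le
  have hH1 : H 1 = 0 := by
    simp [hH, F_one hq1]
  rw [hH1] at this
  simp only [hH] at this
  linarith [this]

end basic

/- Two little lemmas about geometric-like sums with a cap. -/
theorem capped_sum_incr {θ k : ℝ} (hθ : 1 < θ) (hk : 0 ≤ k) (u : ℕ → ℝ)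
    (hupos : ∀ n, 0 < u n) (hgrow : ∀ n, θ * u n ≤ u (n+1)) :
    ∀ N, ∑ n ∈ Finset.range N, (if u n ≤ k then u n else 0) ≤ 2 * θ * k / (θ - 1) := by
  have key : ∀ N, ∑ n ∈ Finset.range N, (if u n ≤ k then u n else 0)
      ≤ θ * min (u N) (2 * k) / (θ - 1) := by
    intro N
    induction N with
    | zero =>
      simp only [Finset.range_zero, Finset.sum_empty]
      apply div_nonneg _ (by linarith : (0:ℝ) ≤ θ - 1)
      apply mul_nonneg (by linarith)
      exact le_min (hupos 0).le (by linarith)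
    | succ N ih =>
      rw [Finset.sum_range_succ]
      by_cases h : u N ≤ k
      · rw [if_pos h]
        have hmin : min (u N) (2*k) = u N := min_eq_left (by linarith)
        rw [hmin] at ih
        have hminN : min (θ * u N) (2 * k) ≤ min (u (N+1)) (2*k) := by
          apply min_le_min _ (le_refl _)
          exact hgrow N
        rcases le_or_gt (θ * u N) (2*k) with hc | hc
        · have : min (θ * u N) (2*k) = θ * u N := min_eq_left hc
          rw [this] at hminN
          have hq : θ * u N / (θ - 1) + u N ≤ θ * (θ * u N) / (θ - 1) := by
            rw [div_add' _ _ _ (by linarith : θ - 1 ≠ 0), div_le_div_iff₀ (by linarith) (by linarith)]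
            nlinarith [mul_nonneg (hupos N).le (sq_nonneg (θ - 1))]
          calc _ ≤ θ * u N / (θ - 1) + u N := by linarith
            _ ≤ θ * (θ * u N) / (θ - 1) := hq
            _ ≤ θ * min (u (N+1)) (2*k) / (θ - 1) := by
                apply div_le_div_of_nonneg_right _ (by linarith)
                apply mul_le_mul_of_nonneg_left hminN (by linarith)
        · have : min (θ * u N) (2*k) = 2*k := min_eq_right hc.le
          rw [this] at hminN
          have hq : θ * u N / (θ - 1) + u N ≤ θ * (2*k) / (θ - 1) := by
            rw [div_add' _ _ _ (by linarith : θ - 1 ≠ 0), div_le_div_iff₀ (by linarith) (by linarith)]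
            nlinarith [mul_le_mul_of_nonneg_right h (show (0:ℝ) ≤ θ - 1 by linarith),
              mul_le_mul_of_nonneg_left h (show (0:ℝ) ≤ θ by linarith),
              mul_nonneg hk (show (0:ℝ) ≤ θ by linarith), sq_nonneg (θ - 1),
              mul_nonneg hk (sq_nonneg (θ - 1))]
          calc _ ≤ θ * u N / (θ - 1) + u N := by linarith
            _ ≤ θ * (2*k) / (θ - 1) := hq
            _ ≤ θ * min (u (N+1)) (2*k) / (θ - 1) := by
                apply div_le_div_of_nonneg_right _ (by linarith)
                apply mul_le_mul_of_nonneg_left hminN (by linarith)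
      · rw [if_neg h, add_zero]
        apply le_trans ih
        apply div_le_div_of_nonneg_right _ (by linarith)
        apply mul_le_mul_of_nonneg_left _ (by linarith)
        apply min_le_min _ (le_refl _)
        calc u N ≤ θ * u N := by nlinarith [hupos N]
          _ ≤ u (N+1) := hgrow N
  intro N
  apply le_trans (key N)
  apply div_le_div_of_nonneg_right _ (by linarith)
  calc θ * min (u N) (2*k) ≤ θ * (2*k) := by
        apply mul_le_mul_of_nonneg_left (min_le_right _ _) (by linarith)
    _ = 2 * θ * k := by ring

theorem capped_sum_decr {θ k : ℝ} (hθ : 1 < θ) (hk : 0 ≤ k) (v : ℕ → ℝ)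
    (hvpos : ∀ n, 0 < v n) (hdec : ∀ n, θ * v (n+1) ≤ v n) :
    ∀ N, ∑ n ∈ Finset.range N, (if v n ≤ k then v n else 0) ≤ θ * k / (θ - 1) := by
  have key : ∀ N, ∑ n ∈ Finset.range N, (if v n ≤ k then v n else 0)
      ≤ θ * (k - min (v N) k) / (θ - 1) := by
    intro N
    induction N with
    | zero =>
      simp only [Finset.range_zero, Finset.sum_empty]
      apply div_nonneg _ (by linarith : (0:ℝ) ≤ θ - 1)
      apply mul_nonneg (by linarith)
      exact sub_nonneg.2 (min_le_right _ _)
    | succ N ih =>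
      rw [Finset.sum_range_succ]
      have hdecN : v (N+1) ≤ v N := by nlinarith [hvpos (N+1), hdec N]
      by_cases h : v N ≤ k
      · rw [if_pos h]
        have hm1 : min (v N) k = v N := min_eq_left h
        have hm2 : min (v (N+1)) k = v (N+1) := min_eq_left (by linarith)
        rw [hm1] at ih
        rw [hm2]
        have : v N ≤ θ * (v N - v (N+1)) / (θ - 1) := by
          rw [le_div_iff₀ (by linarith)]
          nlinarith [hdec N]
        have hsplit : θ * (k - v (N+1)) / (θ - 1)
            = θ * (k - v N) / (θ - 1) + θ * (v N - v (N+1)) / (θ - 1) := by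
          field_simp
          ring
        rw [hsplit]
        linarith
      · rw [if_neg h, add_zero]
        have hm1 : min (v N) k = k := min_eq_right (by linarith)
        rw [hm1] at ih
        simp at ih
        apply le_trans ih
        apply div_nonneg _ (by linarith : (0:ℝ) ≤ θ - 1)
        apply mul_nonneg (by linarith)
        exact sub_nonneg.2 (min_le_right _ _)
  intro N
  apply le_trans (key N)
  apply div_le_div_of_nonneg_right _ (by linarith : (0:ℝ) ≤ θ - 1)
  have h1 : 0 ≤ min (v N) k := le_min (hvpos N).le hk
  nlinarith


theorem one_sub_pow_le {t : ℝ} (h0 : 0 ≤ t) (h1 : t ≤ 1) (i : ℕ) :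
    1 - t ^ i ≤ (i:ℝ) * (1 - t) := by
  have hg : (∑ j ∈ Finset.range i, t ^ j) * (t - 1) = t ^ i - 1 := geom_sum_mul t i
  have hb : (∑ j ∈ Finset.range i, t ^ j) ≤ (i:ℝ) := by
    calc (∑ j ∈ Finset.range i, t ^ j) ≤ ∑ _j ∈ Finset.range i, (1:ℝ) :=
          Finset.sum_le_sum (fun j _ => pow_le_one₀ h0 h1)
      _ = (i:ℝ) := by simp
  nlinarith [mul_le_mul_of_nonneg_right hb (show (0:ℝ) ≤ 1 - t by linarith)]

/-- the function appearing in the second-order error of the generating function -/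
def B (k : ℕ) (t : ℝ) : ℝ := (1 - t ^ k) - (k:ℝ) * t ^ (k-1) * (1 - t)

theorem B_eq (k : ℕ) (t : ℝ) :
    B k t = (1 - t) * (∑ j ∈ Finset.range k, (t ^ j - t ^ (k-1))) := by
  have hg : (∑ j ∈ Finset.range k, t ^ j) * (t - 1) = t ^ k - 1 := geom_sum_mul t k
  have hsub : (∑ j ∈ Finset.range k, (t ^ j - t ^ (k-1)))
      = (∑ j ∈ Finset.range k, t ^ j) - (k:ℝ) * t ^ (k-1) := by
    rw [Finset.sum_sub_distrib, Finset.sum_const, Finset.card_range, nsmul_eq_mul]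
  rw [hsub, B]
  linear_combination hg

theorem B_nonneg {k : ℕ} {t : ℝ} (h0 : 0 ≤ t) (h1 : t ≤ 1) : 0 ≤ B k t := by
  rw [B_eq]
  apply mul_nonneg (by linarith)
  apply Finset.sum_nonneg
  intro j hj
  have hjk : j < k := Finset.mem_range.1 hj
  have : t ^ (k-1) ≤ t ^ j := pow_le_pow_of_le_one h0 h1 (by omega)
  linarith

theorem B_le_one {k : ℕ} {t : ℝ} (h0 : 0 ≤ t) (h1 : t ≤ 1) : B k t ≤ 1 := by
  have h2 : 0 ≤ (k:ℝ) * t^(k-1) * (1-t) :=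
    mul_nonneg (mul_nonneg (Nat.cast_nonneg k) (pow_nonneg h0 _)) (by linarith)
  have h3 : 0 ≤ t ^ k := pow_nonneg h0 k
  simp only [B]
  linarith

theorem B_le_sq {k : ℕ} {t : ℝ} (h0 : 0 ≤ t) (h1 : t ≤ 1) :
    B k t ≤ (k:ℝ)^2 * (1-t)^2 := by
  rw [B_eq]
  have hterm : ∀ j ∈ Finset.range k, t ^ j - t ^ (k-1) ≤ (k:ℝ) * (1 - t) := by
    intro j hj
    have hjk : j < k := Finset.mem_range.1 hj
    have hsplit : t ^ (k-1) = t ^ j * t ^ (k-1-j) := by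
      rw [← pow_add]
      congr 1
      omega
    have h4 : t ^ j - t ^ (k-1) = t ^ j * (1 - t ^ (k-1-j)) := by rw [hsplit]; ring
    have h5 : t ^ j * (1 - t ^ (k-1-j)) ≤ 1 * (1 - t ^ (k-1-j)) :=
      mul_le_mul_of_nonneg_right (pow_le_one₀ h0 h1)
        (by linarith [pow_le_one₀ h0 h1 (n := k-1-j)])
    have h6 : 1 - t ^ (k-1-j) ≤ ((k-1-j : ℕ):ℝ) * (1-t) := one_sub_pow_le h0 h1 _
    have h7 : ((k-1-j:ℕ):ℝ) ≤ (k:ℝ) := by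
      exact_mod_cast Nat.cast_le.2 (by omega : k-1-j ≤ k)
    calc t^j - t^(k-1) = t^j * (1 - t^(k-1-j)) := h4
      _ ≤ 1 * (1 - t^(k-1-j)) := h5
      _ = 1 - t^(k-1-j) := one_mul _
      _ ≤ ((k-1-j:ℕ):ℝ) * (1-t) := h6
      _ ≤ (k:ℝ) * (1-t) := mul_le_mul_of_nonneg_right h7 (by linarith)
  have hsum : (∑ j ∈ Finset.range k, (t ^ j - t ^ (k-1))) ≤ (k:ℝ) * ((k:ℝ) * (1-t)) := by
    calc (∑ j ∈ Finset.range k, (t ^ j - t ^ (k-1)))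
        ≤ ∑ _j ∈ Finset.range k, (k:ℝ)*(1-t) := Finset.sum_le_sum hterm
      _ = (k:ℝ) * ((k:ℝ)*(1-t)) := by
          rw [Finset.sum_const, Finset.card_range, nsmul_eq_mul]
  calc (1-t) * (∑ j ∈ Finset.range k, (t ^ j - t ^ (k-1)))
      ≤ (1-t) * ((k:ℝ) * ((k:ℝ)*(1-t))) := mul_le_mul_of_nonneg_left hsum (by linarith)
    _ = (k:ℝ)^2 * (1-t)^2 := by ring

theorem prod_one_sub_ge (a : ℕ → ℝ) (ha0 : ∀ j, 0 ≤ a j) (ha1 : ∀ j, a j ≤ 1) (N : ℕ) :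
    ∀ n, N ≤ n → 1 - (∑ j ∈ Finset.Ico N n, a j) ≤ ∏ j ∈ Finset.Ico N n, (1 - a j) := by
  intro n hn
  induction n, hn using Nat.le_induction with
  | base => simp
  | succ n hn ih =>
    rw [Finset.sum_Ico_succ_top hn, Finset.prod_Ico_succ_top hn]
    have h1 : 0 ≤ ∏ j ∈ Finset.Ico N n, (1 - a j) :=
      Finset.prod_nonneg (fun j _ => by linarith [ha1 j])
    have h2 : 0 ≤ ∑ j ∈ Finset.Ico N n, a j := Finset.sum_nonneg (fun j _ => ha0 j)
    nlinarith [mul_le_mul_of_nonneg_right ih (show 0 ≤ 1 - a n by linarith [ha1 n]),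
      mul_nonneg h2 (ha0 n)]


end GWaux

set_option maxHeartbeats 1000000

open GWaux

/-- For a Galton–Watson process with offspring distribution `q` satisfying `q 0 = 0` and
mean `m ∈ (1, ∞)`, with `φ_n` the probability generating function of the `n`-th
generation, `φinv n` its inverse on `(0,1)` and `c n = -1 / ln (φinv n s)`: for every
`s ∈ (0,1)`, the ratio `φ'_n(φ_n^{-1}(s)) / c_n` converges, as `n → ∞`, to a positive
finite constant. -/
theorem pgf_deriv_div_c_tendsto_positive_constant
    (q : ℕ → ℝ) (hq_nonneg : ∀ ℓ, 0 ≤ q ℓ) (hq_zero : q 0 = 0) (hq_sum : ∑' ℓ, q ℓ = 1)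
    (m : ℝ) (hm_def : m = ∑' ℓ : ℕ, (ℓ : ℝ) * q ℓ) (hm_one : 1 < m)
    (GW : Measure Config) (hGW : IsGW q GW)
    (s : ℝ) (hs : s ∈ Set.Ioo (0 : ℝ) 1)
    (φinv : ℕ → ℝ → ℝ)
    (hφinv : ∀ n, ∀ x ∈ Set.Ioo (0 : ℝ) 1,
      φinv n x ∈ Set.Ioo (0 : ℝ) 1 ∧ pgf GW n (φinv n x) = x)
    (hφinv_left : ∀ n, ∀ y ∈ Set.Ioo (0 : ℝ) 1, φinv n (pgf GW n y) = y)
    (c : ℕ → ℝ) (hc : ∀ n, c n = -1 / Real.log (φinv n s)) :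
    ∃ L : ℝ, 0 < L ∧
      Tendsto (fun n => deriv (pgf GW n) (φinv n s) / c n) atTop (nhds L) := by
  -- summability of q and of k ↦ k q k
  have hqs : Summable q := by
    by_contra h
    rw [tsum_eq_zero_of_not_summable h] at hq_sum
    norm_num at hq_sum
  have hms : Summable (fun k : ℕ => (k:ℝ) * q k) := by
    by_contra h
    rw [tsum_eq_zero_of_not_summable h] at hm_def
    rw [hm_def] at hm_one
    norm_num at hm_one
  -- there is K ≥ 2 with q K > 0
  obtain ⟨K, hK2le, hKpos⟩ : ∃ K, 2 ≤ K ∧ 0 < q K := by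
    by_contra h
    push_neg at h
    have hzero : ∀ k, 2 ≤ k → q k = 0 := fun k hk => le_antisymm (h k hk) (hq_nonneg k)
    have hm1 : m = q 1 := by
      rw [hm_def, tsum_eq_single 1]
      · norm_num
      · intro b hb
        rcases Nat.lt_or_ge b 2 with hb2 | hb2
        · interval_cases b
          · simp
          · exact absurd rfl hb
        · rw [hzero b hb2, mul_zero]
    have hq1le : q 1 ≤ 1 := by
      rw [← hq_sum]
      exact Summable.le_tsum hqs 1 (fun k _ => hq_nonneg k)
    rw [hm1] at hm_one
    linarith
  have hK1le : 1 ≤ K := by omega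
  -- F maps (0,1) to itself
  have hFmaps : ∀ x ∈ Set.Ioo (0:ℝ) 1, F q x ∈ Set.Ioo (0:ℝ) 1 := by
    intro x hx
    exact ⟨F_pos hq_nonneg hqs hKpos hx.1 hx.2.le,
      lt_trans (F_lt_self hq_nonneg hq_zero hqs hq_sum hK2le hKpos hx.1 hx.2) hx.2⟩
  have hpgf : ∀ n, ∀ x ∈ Set.Ioo (0:ℝ) 1, pgf GW n x = (F q)^[n] x := by
    intro n x hx
    exact pgf_iter q GW hGW hq_nonneg hqs hFmaps n x hx
  -- the sequence y n = φinv n s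
  set y : ℕ → ℝ := fun n => φinv n s with hy_def
  have hy : ∀ n, y n ∈ Set.Ioo (0:ℝ) 1 := fun n => (hφinv n s hs).1
  have hys : ∀ n, pgf GW n (y n) = s := fun n => (hφinv n s hs).2
  have hrec : ∀ n, F q (y (n+1)) = y n := by
    intro n
    have h1 : pgf GW (n+1) (y (n+1)) = pgf GW n (F q (y (n+1))) :=
      pgf_succ q GW hGW hq_nonneg hqs _ (hy (n+1)).1.le (hy (n+1)).2.le n
    have h2 : pgf GW n (F q (y (n+1))) = s := by rw [← h1]; exact hys (n+1)
    have h3 := hφinv_left n (F q (y (n+1))) (hFmaps _ (hy (n+1)))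
    rw [h2] at h3
    exact h3.symm
  have hmono : StrictMono y := by
    apply strictMono_nat_of_lt_succ
    intro n
    have := F_lt_self hq_nonneg hq_zero hqs hq_sum hK2le hKpos (hy (n+1)).1 (hy (n+1)).2
    rw [hrec n] at this
    exact this
  set ε : ℕ → ℝ := fun n => 1 - y n with hε_def
  have hεpos : ∀ n, 0 < ε n := fun n => by
    show 0 < 1 - y n
    linarith [(hy n).2]
  have hεanti : ∀ n, ε (n+1) ≤ ε n := fun n => by
    show 1 - y (n+1) ≤ 1 - y n
    linarith [hmono (Nat.lt_succ_self n)]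
  -- the ratio θ > 1 and geometric decay of ε
  set θ : ℝ := sg q (y 1) with hθ_def
  have hεeq : ∀ n, ε n = ε (n+1) * sg q (y (n+1)) := by
    intro n
    have h := sg_eq hq_nonneg hqs hq_sum hms (hy (n+1)).1.le (hy (n+1)).2.le
    rw [hrec n] at h
    exact h
  have hθ1 : 1 < θ := by
    have hθε : ε 0 = ε 1 * θ := hεeq 0
    have h01 : y 0 < y 1 := hmono Nat.zero_lt_one
    have h0 : ε 1 < ε 0 := by
      show 1 - y 1 < 1 - y 0
      linarith
    nlinarith [hεpos 1, hεpos 0]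
  have hstep : ∀ n, θ * ε (n+1) ≤ ε n := by
    intro n
    rw [hεeq n]
    have hsgm : θ ≤ sg q (y (n+1)) := by
      rw [hθ_def]
      exact sg_mono hq_nonneg hms (hy 1).1.le (hmono.monotone (by omega)) (hy (n+1)).2.le
    nlinarith [hεpos (n+1)]
  -- lambda
  set lam : ℕ → ℝ := fun n => -Real.log (y n) with hlam_def
  have hlampos : ∀ n, 0 < lam n := by
    intro n
    have := Real.log_neg (hy n).1 (hy n).2
    show 0 < -Real.log (y n)
    linarith
  have hlamge : ∀ n, ε n ≤ lam n := by
    intro n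
    have h := Real.log_le_sub_one_of_pos (hy n).1
    show 1 - y n ≤ -Real.log (y n)
    linarith
  -- derivatives
  set d : ℕ → ℝ := fun n => ∏ i ∈ Finset.range n, Fd q (y (i+1)) with hd_def
  have hd0 : d 0 = 1 := Finset.prod_range_zero _
  have hdsucc : ∀ n, d (n+1) = d n * Fd q (y (n+1)) := by
    intro n
    show (∏ i ∈ Finset.range (n+1), Fd q (y (i+1))) = _
    rw [Finset.prod_range_succ]
  have hdpos : ∀ n, 0 < d n := by
    intro n
    apply Finset.prod_pos
    intro i _
    exact Fd_pos hq_nonneg hms hK1le hKpos (hy (i+1)).1 (hy (i+1)).2.le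
  have hiter_deriv : ∀ n, HasDerivAt ((F q)^[n]) (d n) (y n) := by
    intro n
    induction n with
    | zero => simpa [hd0] using (hasDerivAt_id (y 0))
    | succ n ih =>
      have hF : HasDerivAt (F q) (Fd q (y (n+1))) (y (n+1)) :=
        hasDerivAt_F hq_nonneg hqs hms ⟨by linarith [(hy (n+1)).1], (hy (n+1)).2⟩
      have ihy : HasDerivAt ((F q)^[n]) (d n) (F q (y (n+1))) := by
        rw [hrec n]; exact ih
      have hcomp : HasDerivAt ((F q)^[n] ∘ F q) (d n * Fd q (y (n+1))) (y (n+1)) :=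
        ihy.comp _ hF
      rw [Function.iterate_succ (F q) n, hdsucc n]
      exact hcomp
  have hderiv : ∀ n, HasDerivAt (pgf GW n) (d n) (y n) := by
    intro n
    apply HasDerivAt.congr_of_eventuallyEq (hiter_deriv n)
    apply Filter.eventuallyEq_of_mem (isOpen_Ioo.mem_nhds (hy n) : Set.Ioo (0:ℝ) 1 ∈ nhds (y n))
    intro x hx
    exact hpgf n x hx
  -- R and its monotonicity
  set R : ℕ → ℝ := fun n => d n * lam n with hR_def
  have hRpos : ∀ n, 0 < R n := fun n => mul_pos (hdpos n) (hlampos n)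
  have hkey : ∀ n, Fd q (y (n+1)) * lam (n+1) ≤ lam n := by
    intro n
    have h := key_ineq hq_nonneg hq_zero hqs hq_sum hms hK1le hKpos (hy (n+1))
    rw [hrec n] at h
    exact h
  have hRdec : ∀ n, R (n+1) ≤ R n := by
    intro n
    show d (n+1) * lam (n+1) ≤ d n * lam n
    rw [hdsucc n, mul_assoc]
    exact mul_le_mul_of_nonneg_left (hkey n) (hdpos n).le
  have hRanti : Antitone R := antitone_nat_of_succ_le hRdec
  -- the deficits a n
  set a : ℕ → ℝ := fun n => 1 - Fd q (y (n+1)) * lam (n+1) / lam n with ha_def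
  have ha0 : ∀ n, 0 ≤ a n := by
    intro n
    show 0 ≤ 1 - Fd q (y (n+1)) * lam (n+1) / lam n
    rw [sub_nonneg, div_le_one (hlampos n)]
    exact hkey n
  have ha1 : ∀ n, a n ≤ 1 := by
    intro n
    show 1 - Fd q (y (n+1)) * lam (n+1) / lam n ≤ 1
    have hFd : 0 ≤ Fd q (y (n+1)) := Fd_nonneg hq_nonneg (hy (n+1)).1.le
    have h2 : 0 ≤ Fd q (y (n+1)) * lam (n+1) / lam n :=
      div_nonneg (mul_nonneg hFd (hlampos (n+1)).le) (hlampos n).le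
    linarith
  have hRmul : ∀ n, R (n+1) = R n * (1 - a n) := by
    intro n
    show d (n+1) * lam (n+1) = d n * lam n * (1 - (1 - Fd q (y (n+1)) * lam (n+1) / lam n))
    rw [hdsucc n]
    field_simp [(hlampos n).ne']
    ring
  -- the error terms En
  set En : ℕ → ℝ := fun n => (1 - F q (y (n+1))) - Fd q (y (n+1)) * ε (n+1) with hEn_def
  have hEn_tsum : ∀ n, En n = ∑' k, q k * B k (y (n+1)) := by
    intro n
    have hx' := hy (n+1)
    have habs : |y (n+1)| ≤ 1 := abs_le.2 ⟨by linarith [hx'.1], hx'.2.le⟩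
    have hs1 : Summable (fun k => q k * (y (n+1)) ^ k) := summable_term hq_nonneg hqs habs
    have hs2 : Summable (fun k => q k * ((k:ℝ) * (y (n+1)) ^ (k-1))) :=
      summable_dterm hq_nonneg hms habs
    have h1 : 1 - F q (y (n+1)) = ∑' k, (q k - q k * (y (n+1))^k) := by
      rw [Summable.tsum_sub hqs hs1, hq_sum]
      rfl
    have h2 : Fd q (y (n+1)) * ε (n+1)
        = ∑' k, (q k * ((k:ℝ) * (y (n+1))^(k-1)) * ε (n+1)) := by
      rw [tsum_mul_right]
      rfl
    show (1 - F q (y (n+1))) - Fd q (y (n+1)) * ε (n+1) = _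
    rw [h1, h2, ← Summable.tsum_sub (hqs.sub hs1) (hs2.mul_right _)]
    apply tsum_congr
    intro k
    show (q k - q k * (y (n+1))^k) - q k * ((k:ℝ) * (y (n+1))^(k-1)) * (1 - y (n+1))
      = q k * B k (y (n+1))
    simp only [B]
    ring
  have hEn_nonneg : ∀ n, 0 ≤ En n := by
    intro n
    rw [hEn_tsum n]
    exact tsum_nonneg (fun k =>
      mul_nonneg (hq_nonneg k) (B_nonneg (hy (n+1)).1.le (hy (n+1)).2.le))
  -- the bound a n ≤ ε n / y 0 + En n / ε (n+1)
  have habound : ∀ n, a n ≤ ε n / y 0 + En n / ε (n+1) := by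
    intro n
    have hD0 : 0 ≤ lam n - Fd q (y (n+1)) * lam (n+1) := by linarith [hkey n]
    have haD : a n = (lam n - Fd q (y (n+1)) * lam (n+1)) / lam n := by
      show 1 - Fd q (y (n+1)) * lam (n+1) / lam n = _
      field_simp [(hlampos n).ne']
    have h1 : a n ≤ (lam n - Fd q (y (n+1)) * lam (n+1)) / ε n := by
      rw [haD]
      exact div_le_div_of_nonneg_left hD0 (hεpos n) (hlamge n)
    have hT3 : 1 - y (n+1) ≤ lam (n+1) := hlamge (n+1)
    have hFd0 : 0 ≤ Fd q (y (n+1)) := Fd_nonneg hq_nonneg (hy (n+1)).1.le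
    -- T1: -log (y n) - (1 - y n) ≤ ε n ^ 2 / y 0
    have hT1 : lam n - (1 - y n) ≤ ε n ^ 2 / y 0 := by
      have hyn := (hy n).1
      have hlog : -Real.log (y n) ≤ (1 - y n) / y n := by
        have h := Real.log_le_sub_one_of_pos (inv_pos.2 (hy n).1)
        rw [Real.log_inv] at h
        have h2 : (y n)⁻¹ - 1 = (1 - y n)/y n := by field_simp
        linarith
      have hy0n : y 0 ≤ y n := hmono.monotone (Nat.zero_le n)
      have he : (1 - y n)/y n - (1 - y n) = (1 - y n)^2 / y n := by
        field_simp
      have hfrac : (1 - y n)^2 / y n ≤ (1 - y n)^2 / y 0 :=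
        div_le_div_of_nonneg_left (sq_nonneg _) (hy 0).1 hy0n
      show -Real.log (y n) - (1 - y n) ≤ (1 - y n) ^ 2 / y 0
      linarith
    have hDle : lam n - Fd q (y (n+1)) * lam (n+1) ≤ ε n ^ 2 / y 0 + En n := by
      have hEn' : En n = (1 - y n) - Fd q (y (n+1)) * (1 - y (n+1)) := by
        show (1 - F q (y (n+1))) - Fd q (y (n+1)) * (1 - y (n+1)) = _
        rw [hrec n]
      have h4 : Fd q (y (n+1)) * (1 - y (n+1)) ≤ Fd q (y (n+1)) * lam (n+1) :=
        mul_le_mul_of_nonneg_left hT3 hFd0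
      rw [hEn']
      clear_value y ε lam En
      linarith [h4, hT1]
    have h5 : (lam n - Fd q (y (n+1)) * lam (n+1)) / ε n ≤ (ε n ^ 2 / y 0 + En n) / ε n :=
      (div_le_div_iff_of_pos_right (hεpos n)).2 hDle
    have h6 : (ε n ^ 2 / y 0 + En n) / ε n = ε n / y 0 + En n / ε n := by
      field_simp [(hεpos n).ne', (hy 0).1.ne']
    have h7 : En n / ε n ≤ En n / ε (n+1) :=
      div_le_div_of_nonneg_left (hEn_nonneg n) (hεpos (n+1)) (hεanti n)
    rw [h6] at h5
    linarith
  -- summability of ε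
  have hgeo : ∀ n, ε n ≤ ε 0 * (θ⁻¹)^n := by
    intro n
    induction n with
    | zero => simp
    | succ n ih =>
      have hθ0 : θ ≠ 0 := by linarith
      have h1 : ε (n+1) ≤ ε n * θ⁻¹ := by
        calc ε (n+1) = θ⁻¹ * (θ * ε (n+1)) := by
              field_simp
          _ ≤ θ⁻¹ * ε n := mul_le_mul_of_nonneg_left (hstep n)
              (inv_nonneg.2 (by linarith))
          _ = ε n * θ⁻¹ := mul_comm _ _
      calc ε (n+1) ≤ ε n * θ⁻¹ := h1
        _ ≤ (ε 0 * θ⁻¹^n) * θ⁻¹ := mul_le_mul_of_nonneg_right ih (inv_nonneg.2 (by linarith))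
        _ = ε 0 * θ⁻¹^(n+1) := by ring
  have hsum_eps : Summable ε := by
    apply Summable.of_nonneg_of_le (fun n => (hεpos n).le) hgeo
    apply Summable.mul_left
    apply summable_geometric_of_lt_one (inv_nonneg.2 (by linarith))
    rw [inv_lt_one_iff₀]
    right; exact hθ1
  -- summability of En / ε
  have hEdiv_nonneg : ∀ n, 0 ≤ En n / ε (n+1) :=
    fun n => div_nonneg (hEn_nonneg n) (hεpos _).le
  have hperk : ∀ (k : ℕ) (N : ℕ), (∑ n ∈ Finset.range N, (q k * B k (y (n+1)) / ε (n+1)))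
      ≤ (3*θ/(θ-1)) * ((k:ℝ) * q k) := by
    intro k N
    rcases Nat.eq_zero_or_pos k with rfl | hk1
    · simp [B]
    · have hκ : (1:ℝ) ≤ (k:ℝ) := by exact_mod_cast hk1
      have hgrow : ∀ n : ℕ, θ * (ε (n+1))⁻¹ ≤ (ε (n+1+1))⁻¹ := by
        intro n
        have h := hstep (n+1)
        have h2 : θ ≤ ε (n+1) / ε (n+2) := (le_div_iff₀ (hεpos (n+2))).2 (by linarith)
        calc θ * (ε (n+1))⁻¹ ≤ (ε (n+1) / ε (n+2)) * (ε (n+1))⁻¹ :=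
              mul_le_mul_of_nonneg_right h2 (inv_nonneg.2 (hεpos (n+1)).le)
          _ = (ε (n+2))⁻¹ * (ε (n+1) * (ε (n+1))⁻¹) := by ring
          _ = (ε (n+2))⁻¹ := by rw [mul_inv_cancel₀ (hεpos (n+1)).ne', mul_one]
      have hdec : ∀ n : ℕ, θ * ((k:ℝ)^2 * ε (n+1+1)) ≤ (k:ℝ)^2 * ε (n+1) := by
        intro n
        have h := hstep (n+1)
        nlinarith [sq_nonneg (k:ℝ)]
      have hpt : ∀ n, q k * B k (y (n+1)) / ε (n+1)
          ≤ q k * ((if (ε (n+1))⁻¹ ≤ (k:ℝ) then (ε (n+1))⁻¹ else 0)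
            + (if (k:ℝ)^2 * ε (n+1) ≤ (k:ℝ) then (k:ℝ)^2 * ε (n+1) else 0)) := by
        intro n
        have hy' := hy (n+1)
        have hB0 : 0 ≤ B k (y (n+1)) := B_nonneg hy'.1.le hy'.2.le
        have hB1 : B k (y (n+1)) ≤ 1 := B_le_one hy'.1.le hy'.2.le
        have hB2 : B k (y (n+1)) ≤ (k:ℝ)^2 * (ε (n+1))^2 := by
          have := B_le_sq (k := k) hy'.1.le hy'.2.le
          exact this
        rw [mul_div_assoc]
        by_cases hcnd : (ε (n+1))⁻¹ ≤ (k:ℝ)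
        · rw [if_pos hcnd]
          have h1 : B k (y (n+1)) / ε (n+1) ≤ (ε (n+1))⁻¹ := by
            rw [div_le_iff₀ (hεpos (n+1)), inv_mul_cancel₀ (hεpos (n+1)).ne']
            exact hB1
          have h2 : (0:ℝ) ≤ (if (k:ℝ)^2 * ε (n+1) ≤ (k:ℝ) then (k:ℝ)^2 * ε (n+1) else 0) := by
            split
            · exact mul_nonneg (sq_nonneg _) (hεpos (n+1)).le
            · exact le_refl 0
          apply mul_le_mul_of_nonneg_left _ (hq_nonneg k)
          linarith
        · rw [if_neg hcnd]
          have hlt : (k:ℝ) < (ε (n+1))⁻¹ := lt_of_not_ge hcnd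
          have hεκ : (k:ℝ) * ε (n+1) < 1 := by
            have h := mul_lt_mul_of_pos_right hlt (hεpos (n+1))
            rwa [inv_mul_cancel₀ (hεpos (n+1)).ne'] at h
          have hif2 : (k:ℝ)^2 * ε (n+1) ≤ (k:ℝ) := by nlinarith [hεpos (n+1)]
          rw [if_pos hif2]
          have h1 : B k (y (n+1)) / ε (n+1) ≤ (k:ℝ)^2 * ε (n+1) := by
            rw [div_le_iff₀ (hεpos (n+1))]
            nlinarith
          apply mul_le_mul_of_nonneg_left _ (hq_nonneg k)
          linarith
      calc (∑ n ∈ Finset.range N, (q k * B k (y (n+1)) / ε (n+1)))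
          ≤ ∑ n ∈ Finset.range N, q k * ((if (ε (n+1))⁻¹ ≤ (k:ℝ) then (ε (n+1))⁻¹ else 0)
              + (if (k:ℝ)^2 * ε (n+1) ≤ (k:ℝ) then (k:ℝ)^2 * ε (n+1) else 0)) :=
            Finset.sum_le_sum (fun n _ => hpt n)
        _ = q k * ((∑ n ∈ Finset.range N, if (ε (n+1))⁻¹ ≤ (k:ℝ) then (ε (n+1))⁻¹ else 0)
              + (∑ n ∈ Finset.range N, if (k:ℝ)^2 * ε (n+1) ≤ (k:ℝ) then (k:ℝ)^2 * ε (n+1) else 0)) := by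
            rw [← Finset.mul_sum, ← Finset.sum_add_distrib]
        _ ≤ q k * (2*θ*(k:ℝ)/(θ-1) + θ*(k:ℝ)/(θ-1)) := by
            apply mul_le_mul_of_nonneg_left _ (hq_nonneg k)
            have hA := capped_sum_incr hθ1 (by linarith : (0:ℝ) ≤ (k:ℝ))
              (fun n => (ε (n+1))⁻¹) (fun n => inv_pos.2 (hεpos (n+1))) hgrow N
            have hBs := capped_sum_decr hθ1 (by linarith : (0:ℝ) ≤ (k:ℝ))
              (fun n => (k:ℝ)^2 * ε (n+1))
              (fun n => mul_pos (pow_pos (by exact_mod_cast hk1 : (0:ℝ) < (k:ℝ)) 2)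
                (hεpos (n+1))) hdec N
            exact add_le_add hA hBs
        _ = (3*θ/(θ-1)) * ((k:ℝ) * q k) := by
            field_simp
            ring
  have hEsum : Summable (fun n => En n / ε (n+1)) := by
    apply summable_of_sum_range_le hEdiv_nonneg (c := (3*θ/(θ-1)) * m)
    intro N
    have hsummand : ∀ n, Summable (fun k => q k * B k (y (n+1)) / ε (n+1)) := by
      intro n
      apply Summable.div_const
      apply Summable.of_nonneg_of_le
        (fun k => mul_nonneg (hq_nonneg k) (B_nonneg (hy (n+1)).1.le (hy (n+1)).2.le))
        (fun k => ?_) hqs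
      calc q k * B k (y (n+1)) ≤ q k * 1 :=
            mul_le_mul_of_nonneg_left (B_le_one (hy (n+1)).1.le (hy (n+1)).2.le) (hq_nonneg k)
        _ = q k := mul_one _
    have h1 : ∑ n ∈ Finset.range N, En n / ε (n+1)
        = ∑ n ∈ Finset.range N, ∑' k, (q k * B k (y (n+1)) / ε (n+1)) := by
      apply Finset.sum_congr rfl
      intro n _
      rw [hEn_tsum n, ← tsum_div_const]
    have h2 : ∑ n ∈ Finset.range N, ∑' k, (q k * B k (y (n+1)) / ε (n+1))
        = ∑' k, ∑ n ∈ Finset.range N, (q k * B k (y (n+1)) / ε (n+1)) :=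
      (Summable.tsum_finsetSum (fun n _ => hsummand n)).symm
    have hRHSsum : Summable (fun k : ℕ => (3*θ/(θ-1)) * ((k:ℝ) * q k)) := hms.mul_left _
    have hLHSsum : Summable (fun k : ℕ =>
        ∑ n ∈ Finset.range N, (q k * B k (y (n+1)) / ε (n+1))) := by
      apply Summable.of_nonneg_of_le _ (fun k => hperk k N) hRHSsum
      intro k
      apply Finset.sum_nonneg
      intro n _
      exact div_nonneg (mul_nonneg (hq_nonneg k)
        (B_nonneg (hy (n+1)).1.le (hy (n+1)).2.le)) (hεpos _).le
    calc ∑ n ∈ Finset.range N, En n / ε (n+1)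
        = ∑' k, ∑ n ∈ Finset.range N, (q k * B k (y (n+1)) / ε (n+1)) := by rw [h1, h2]
      _ ≤ ∑' k : ℕ, (3*θ/(θ-1)) * ((k:ℝ) * q k) :=
          Summable.tsum_le_tsum (fun k => hperk k N) hLHSsum hRHSsum
      _ = (3*θ/(θ-1)) * m := by rw [tsum_mul_left, ← hm_def]
  have hsa : Summable a := by
    apply Summable.of_nonneg_of_le ha0 habound
    exact (hsum_eps.div_const (y 0)).add hEsum
  -- choose N with small tail
  have hps : Tendsto (fun N => ∑ i ∈ Finset.range N, a i) atTop (nhds (∑' i, a i)) :=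
    hsa.hasSum.tendsto_sum_nat
  obtain ⟨N, hN⟩ := (hps.eventually_const_lt (show (∑' i, a i) - 1/2 < ∑' i, a i by
    norm_num)).exists
  have htail : ∑' i : ℕ, a (i + N) < 1/2 := by
    have h := Summable.sum_add_tsum_nat_add N hsa
    linarith
  -- lower bound for R
  have hprodR : ∀ n, N ≤ n → R n = R N * ∏ j ∈ Finset.Ico N n, (1 - a j) := by
    intro n hn
    induction n, hn using Nat.le_induction with
    | base => simp
    | succ n hn ih =>
      rw [Finset.prod_Ico_succ_top hn, hRmul n, ih]
      ring
  have hhalf : ∀ n, N ≤ n → R N / 2 ≤ R n := by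
    intro n hn
    rw [hprodR n hn]
    have hws := prod_one_sub_ge a ha0 ha1 N n hn
    have hsle : ∑ j ∈ Finset.Ico N n, a j ≤ ∑' i : ℕ, a (i + N) := by
      rw [Finset.sum_Ico_eq_sum_range]
      have hsN : Summable (fun i : ℕ => a (i + N)) := (summable_nat_add_iff N).2 hsa
      have := Summable.sum_le_tsum (Finset.range (n - N)) (fun i _ => ha0 (i + N)) hsN
      calc ∑ i ∈ Finset.range (n - N), a (N + i)
          = ∑ i ∈ Finset.range (n - N), a (i + N) := by
            apply Finset.sum_congr rfl
            intro i _
            rw [Nat.add_comm]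
        _ ≤ ∑' i : ℕ, a (i + N) := this
    have hprodnn : 0 ≤ ∏ j ∈ Finset.Ico N n, (1 - a j) :=
      Finset.prod_nonneg (fun j _ => by linarith [ha1 j])
    nlinarith [hRpos N, hws, htail, hsle]
  set L : ℝ := ⨅ n, R n with hL_def
  have hbdd : BddBelow (Set.range R) := ⟨0, by
    rintro x ⟨n, rfl⟩
    exact (hRpos n).le⟩
  have htendsto : Tendsto R atTop (nhds L) := tendsto_atTop_ciInf hRanti hbdd
  have hLpos : 0 < L := by
    have hle : R N / 2 ≤ L := by
      apply le_ciInf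
      intro n
      rcases le_or_gt N n with h | h
      · exact hhalf n h
      · calc R N / 2 ≤ R N := by linarith [hRpos N]
          _ ≤ R n := hRanti h.le
    linarith [hRpos N]
  refine ⟨L, hLpos, ?_⟩
  apply htendsto.congr
  intro n
  have hdn : deriv (pgf GW n) (φinv n s) = d n := (hderiv n).deriv
  have hlog : Real.log (φinv n s) ≠ 0 := ne_of_lt (Real.log_neg (hy n).1 (hy n).2)
  rw [hc n, hdn]
  show d n * (-Real.log (φinv n s)) = d n / (-1 / Real.log (φinv n s))
  field_simp

end
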